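/- Let (M,g) be a complete m-dimensional Riemannian manifold with a pole, whose radial curvature K_r satisfies −α² ≤ K_r ≤ −β² with α, β > 0 and (m−1)β − pα > 0. Then the eigenvalues of Hess(r²) satisfy Σᵢλᵢ − p·λ_m ≥ 2(m − pα/β). -/

import Mathlib

open RealInnerProductSpace

lemma sinh_le_mul_cosh {x : ℝ} (hx : 0 ≤ x) : Real.sinh x ≤ x * Real.cosh x := by
  have hmono : MonotoneOn (fun x : ℝ => x * Real.cosh x - Real.sinh x) (Set.Ici 0) := by
    apply monotoneOn_of_deriv_nonneg (convex_Ici 0)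
    · exact ((continuous_id.mul Real.continuous_cosh).sub Real.continuous_sinh).continuousOn
    · intro x _
      exact ((differentiableAt_id.mul Real.differentiable_cosh.differentiableAt).sub
        Real.differentiable_sinh.differentiableAt).differentiableWithinAt
    · intro x hx
      rw [interior_Ici, Set.mem_Ioi] at hx
      have h : HasDerivAt (fun x : ℝ => x * Real.cosh x - Real.sinh x)
          ((1 * Real.cosh x + x * Real.sinh x) - Real.cosh x) x :=
        ((hasDerivAt_id x).mul (Real.hasDerivAt_cosh x)).sub (Real.hasDerivAt_sinh x)
      rw [h.deriv]
      nlinarith [Real.sinh_pos_iff.2 hx]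
  have := hmono Set.self_mem_Ici hx hx
  simp only [Real.sinh_zero, Real.cosh_zero, mul_one, zero_mul, sub_zero] at this
  linarith

lemma coth_mul_strictMono : StrictMonoOn (fun x : ℝ => x * Real.cosh x / Real.sinh x) (Set.Ioi 0) := by
  apply strictMonoOn_of_deriv_pos (convex_Ioi 0)
  · apply ContinuousOn.div
    · exact (continuous_id.mul Real.continuous_cosh).continuousOn
    · exact Real.continuous_sinh.continuousOn
    · intro x hx; exact Real.sinh_ne_zero.2 (ne_of_gt hx)
  · intro x hx
    rw [interior_Ioi, Set.mem_Ioi] at hx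
    have hs : Real.sinh x ≠ 0 := Real.sinh_ne_zero.2 hx.ne'
    have h : HasDerivAt (fun x : ℝ => x * Real.cosh x / Real.sinh x)
        (((1 * Real.cosh x + x * Real.sinh x) * Real.sinh x - x * Real.cosh x * Real.cosh x) /
          Real.sinh x ^ 2) x :=
      (((hasDerivAt_id x).mul (Real.hasDerivAt_cosh x)).div (Real.hasDerivAt_sinh x) hs)
    rw [h.deriv]
    have h2 : 2 * x < Real.sinh (2 * x) := Real.self_lt_sinh_iff.2 (by linarith)
    rw [Real.sinh_two_mul] at h2
    have hcsq : Real.cosh x ^ 2 = Real.sinh x ^ 2 + 1 := Real.cosh_sq x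
    have hspos : 0 < Real.sinh x := Real.sinh_pos_iff.2 hx
    apply div_pos _ (by positivity)
    nlinarith



set_option maxHeartbeats 1000000 in
/-- eigenvalue estimate under pinched negative radial curvature
`−α² ≤ K_r ≤ −β²`.  The curvature condition enters (as in the Hessian comparison
theorem, cf. the context) through the bounds
`β·coth(βr)[g − dr⊗dr] ≤ Hess(r) ≤ α·coth(αr)[g − dr⊗dr]` on the self-adjoint
operator `A` representing `Hess(r)`.  The manifold has dimension `m + 1` and
`lam 0 ≤ … ≤ lam m` are the eigenvalues of `Hess(r²) = 2 dr⊗dr + 2r Hess(r)`.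
If `((m+1)−1)·β − p·α > 0`, then `Σᵢ λᵢ − p·λ_max ≥ 2((m+1) − p·α/β)`. -/
theorem hessian_eigenvalue_estimate_negative_curvature {E : Type*} [NormedAddCommGroup E]
    [InnerProductSpace ℝ E] {m : ℕ}
    (p r α β : ℝ) (hp : 1 ≤ p) (hr : 0 < r)
    (hα : 0 < α) (hβ : 0 < β) (hdim : 0 < (m : ℝ) * β - p * α)
    (ρv : E) (hρv : ‖ρv‖ = 1)
    (A : E →ₗ[ℝ] E) (hAsym : ∀ v w, ⟪A v, w⟫ = ⟪v, A w⟫) (hAρ : A ρv = 0)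
    (hA_lb : ∀ v, ⟪v, ρv⟫ = 0 →
      β * (Real.cosh (β * r) / Real.sinh (β * r)) * ‖v‖ ^ 2 ≤ ⟪A v, v⟫)
    (hA_ub : ∀ v, ⟪v, ρv⟫ = 0 →
      ⟪A v, v⟫ ≤ α * (Real.cosh (α * r) / Real.sinh (α * r)) * ‖v‖ ^ 2)
    (lam : Fin (m + 1) → ℝ) (hmono : Monotone lam)
    (b : OrthonormalBasis (Fin (m + 1)) ℝ E)
    (hb : ∀ i, (2 * ⟪b i, ρv⟫) • ρv + (2 * r) • A (b i) = lam i • b i) :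
    2 * (((m : ℝ) + 1) - p * α / β) ≤ (∑ i, lam i) - p * lam (Fin.last m) := by
  set B : ℝ := β * (Real.cosh (β * r) / Real.sinh (β * r)) with hB
  set C : ℝ := α * (Real.cosh (α * r) / Real.sinh (α * r)) with hC
  have hsβ : 0 < Real.sinh (β * r) := Real.sinh_pos_iff.2 (by positivity)
  have hsα : 0 < Real.sinh (α * r) := Real.sinh_pos_iff.2 (by positivity)
  have hcβ : 0 < Real.cosh (β * r) := Real.cosh_pos _
  have hcα : 0 < Real.cosh (α * r) := Real.cosh_pos _
  have hBpos : 0 < B := by rw [hB]; positivity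
  have hCpos : 0 < C := by rw [hC]; positivity
  have hrB : 1 ≤ r * B := by
    have h1 : r * B = (β * r) * Real.cosh (β * r) / Real.sinh (β * r) := by
      rw [hB]; field_simp
    rw [h1, le_div_iff₀ hsβ, one_mul]
    exact sinh_le_mul_cosh (by positivity)
  have hrC : 1 ≤ r * C := by
    have h1 : r * C = (α * r) * Real.cosh (α * r) / Real.sinh (α * r) := by
      rw [hC]; field_simp
    rw [h1, le_div_iff₀ hsα, one_mul]
    exact sinh_le_mul_cosh (by positivity)
  set c : Fin (m + 1) → ℝ := fun i => ⟪b i, ρv⟫ with hc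
  set v : Fin (m + 1) → E := fun i => b i - c i • ρv with hv
  have hρρ : ⟪ρv, ρv⟫ = 1 := by
    rw [real_inner_self_eq_norm_sq, hρv]; norm_num
  have hvo : ∀ i, ⟪v i, ρv⟫ = 0 := by
    intro i
    rw [hv]
    simp only [inner_sub_left, real_inner_smul_left, hρρ, mul_one]
    rw [hc]; ring
  have hci : ∀ i, (⟪b i, ρv⟫ : ℝ) = c i := fun _ => rfl
  have hbv : ∀ i, (b i : E) = v i + c i • ρv := by
    intro i; rw [hv]; simp
  have hnb : ∀ i, ‖(b i : E)‖ = 1 := fun i => b.orthonormal.1 i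
  have hnv : ∀ i, ‖v i‖ ^ 2 = 1 - c i ^ 2 := by
    intro i
    rw [hv, @norm_sub_sq_real]
    rw [real_inner_smul_right, norm_smul, hρv, hnb i]
    simp [hc]
    ring
  have hAb : ∀ i, A (b i) = A (v i) := by
    intro i
    rw [hbv i, map_add, map_smul, hAρ, smul_zero, add_zero]
  have hAvρ : ∀ i, ⟪A (v i), ρv⟫ = 0 := by
    intro i; rw [hAsym, hAρ, inner_zero_right]
  have hAvv : ∀ i, ⟪A (b i), b i⟫ = ⟪A (v i), v i⟫ := by
    intro i
    rw [hAb i, hbv i, inner_add_right, real_inner_smul_right, hAvρ i, mul_zero, add_zero]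
  have hlam : ∀ i, lam i = 2 * c i ^ 2 + 2 * r * ⟪A (v i), v i⟫ := by
    intro i
    have h2 : ⟪(2 * c i) • ρv + (2 * r) • A (b i), b i⟫ = ⟪lam i • b i, b i⟫ := by
      rw [hb i]
    rw [inner_add_left, real_inner_smul_left, real_inner_smul_left, real_inner_smul_left,
      real_inner_self_eq_norm_sq, hnb i, hAvv i] at h2
    rw [real_inner_comm (b i) ρv, hci i] at h2
    nlinarith [h2]
  have hc_sum : ∑ i, c i ^ 2 = 1 := by
    have h := b.sum_inner_mul_inner ρv ρv
    rw [hρρ] at h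
    rw [← h]
    apply Finset.sum_congr rfl
    intro i _
    rw [real_inner_comm (b i) ρv]
    rw [hci i, sq]
  have hub : ∀ i, lam i ≤ 2 * r * C := by
    intro i
    have h1 := hA_ub (v i) (hvo i)
    rw [hnv i] at h1
    have hc2 : 0 ≤ 1 - c i ^ 2 := by rw [← hnv i]; positivity
    nlinarith [hlam i, sq_nonneg (c i), hr]
  have hlb : ∀ i, 2 * c i ^ 2 + 2 * r * (B * (1 - c i ^ 2)) ≤ lam i := by
    intro i
    have h1 := hA_lb (v i) (hvo i)
    rw [hnv i] at h1
    nlinarith [hlam i, hr]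
  have hm1 : 1 ≤ (m : ℝ) := by
    have hm0 : m ≠ 0 := by
      rintro rfl; simp at hdim; nlinarith
    exact_mod_cast Nat.one_le_iff_ne_zero.2 hm0
  have hsum : 2 + 2 * r * B * m ≤ ∑ i, lam i := by
    have h1 : ∑ i, (2 * c i ^ 2 + 2 * r * (B * (1 - c i ^ 2))) ≤ ∑ i, lam i :=
      Finset.sum_le_sum fun i _ => hlb i
    have h2 : ∑ i, (2 * c i ^ 2 + 2 * r * (B * (1 - c i ^ 2))) = 2 + 2 * r * B * m := by
      have e : ∀ i : Fin (m + 1), 2 * c i ^ 2 + 2 * r * (B * (1 - c i ^ 2))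
          = (2 - 2 * r * B) * c i ^ 2 + 2 * r * B := fun i => by ring
      rw [Finset.sum_congr rfl fun i _ => e i, Finset.sum_add_distrib, ← Finset.mul_sum,
        hc_sum, Finset.sum_const, Finset.card_univ, Fintype.card_fin]
      push_cast
      ring
    linarith [h1, h2 ▸ h1]
  -- β ≤ α, derived from consistency of the two Hessian bounds
  have hβα : β ≤ α := by
    have hex : ∃ i, 0 < 1 - c i ^ 2 := by
      by_contra hcon
      push_neg at hcon
      have hs0 : ∑ i, (1 - c i ^ 2) ≤ 0 := Finset.sum_nonpos fun i _ => hcon i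
      have hs1 : ∑ i, (1 - c i ^ 2) = (m : ℝ) := by
        rw [Finset.sum_sub_distrib, hc_sum, Finset.sum_const, Finset.card_univ,
          Fintype.card_fin]
        push_cast
        ring
      linarith
    obtain ⟨i, hi⟩ := hex
    have h1 := hA_lb (v i) (hvo i)
    have h2 := hA_ub (v i) (hvo i)
    rw [hnv i] at h1 h2
    have hBC : B ≤ C := le_of_mul_le_mul_right (by linarith) hi
    by_contra hcon
    push_neg at hcon
    have hlt : (α * r) * Real.cosh (α * r) / Real.sinh (α * r)
        < (β * r) * Real.cosh (β * r) / Real.sinh (β * r) :=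
      coth_mul_strictMono (Set.mem_Ioi.2 (by positivity)) (Set.mem_Ioi.2 (by positivity))
        (by nlinarith)
    have e1 : (α * r) * Real.cosh (α * r) / Real.sinh (α * r) = r * C := by
      rw [hC]; field_simp
    have e2 : (β * r) * Real.cosh (β * r) / Real.sinh (β * r) = r * B := by
      rw [hB]; field_simp
    rw [e1, e2] at hlt
    nlinarith
  -- coth is decreasing : C ≤ (α/β) * B
  have hcothkey : Real.cosh (α * r) * Real.sinh (β * r)
      ≤ Real.cosh (β * r) * Real.sinh (α * r) := by
    have h0 : 0 ≤ Real.sinh (α * r - β * r) :=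
      Real.sinh_nonneg_iff.2 (by nlinarith)
    rw [Real.sinh_sub] at h0
    nlinarith
  have hCBβ : β * C ≤ α * B := by
    rw [hB, hC]
    rw [show β * (α * (Real.cosh (α * r) / Real.sinh (α * r)))
        = (α * β) * (Real.cosh (α * r) / Real.sinh (α * r)) by ring]
    rw [show α * (β * (Real.cosh (β * r) / Real.sinh (β * r)))
        = (α * β) * (Real.cosh (β * r) / Real.sinh (β * r)) by ring]
    apply mul_le_mul_of_nonneg_left _ (by positivity)
    rw [div_le_div_iff₀ hsα hsβ]
    nlinarith [hcothkey]
  have hup := hub (Fin.last m)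
  have hplam : p * lam (Fin.last m) ≤ p * (2 * r * C) :=
    mul_le_mul_of_nonneg_left hup (by linarith)
  have hfrac : p * α < (m : ℝ) * β := by linarith
  rw [← mul_le_mul_iff_right₀ hβ]
  have e : β * (2 * (((m : ℝ) + 1) - p * α / β)) = 2 * (((m : ℝ) + 1) * β - p * α) := by
    field_simp
  rw [e]
  have H1 : β * (2 + 2 * r * B * m) ≤ β * (∑ i, lam i) := by nlinarith [hsum]
  have H2 : β * (p * lam (Fin.last m)) ≤ β * (p * (2 * r * C)) := by nlinarith [hplam]
  have H3 : 2 * p * r * (β * C) ≤ 2 * p * r * (α * B) :=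
    mul_le_mul_of_nonneg_left hCBβ (by positivity)
  have H4 : 0 ≤ (r * B - 1) * ((m : ℝ) * β - p * α) := by
    apply mul_nonneg <;> linarith
  nlinarith [H1, H2, H3, H4]
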